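/- Let V be a real inner product space, ξ a unit vector orthogonal to V inside V̂ = ℝξ ⊕ V, T ∈ so(V) extended to V̂ by Tξ = 0, and Z ∈ V a cyclic vector for T on V. If dim V ≥ 1, then the Lie subalgebra of so(V̂) generated by the elements ξ ∧ T^k Z for k = 0, 1, 2, … is all of so(V̂). -/

import Mathlib

open scoped RealInnerProductSpace

attribute [local instance] LieRing.ofAssociativeRing

/-- The skew endomorphism `u ∧ v : x ↦ ⟨u,x⟩v - ⟨v,x⟩u`. -/
noncomputable def wedge {V : Type*} [NormedAddCommGroup V] [InnerProductSpace ℝ V]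
    (u v : V) : Module.End ℝ V :=
  ((innerSL ℝ u).toLinearMap.smulRight v) - ((innerSL ℝ v).toLinearMap.smulRight u)

section Aux

variable {W : Type*} [NormedAddCommGroup W] [InnerProductSpace ℝ W] [FiniteDimensional ℝ W]

lemma wedge_apply (u v x : W) : wedge u v x = ⟪u, x⟫ • v - ⟪v, x⟫ • u := rfl

lemma wedge_self (u : W) : wedge u u = 0 := by
  ext x; simp [wedge_apply]

/-- `wedge u` as a linear map in the second argument. -/
noncomputable def wedgeL (u : W) : W →ₗ[ℝ] Module.End ℝ W where
  toFun v := wedge u v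
  map_add' v w := by
    ext x
    simp [wedge_apply, inner_add_left, add_smul, smul_add]
    abel
  map_smul' c v := by
    ext x
    simp [wedge_apply, real_inner_smul_left, smul_smul, smul_sub, mul_comm]

lemma wedge_antisymm (u v : W) : wedge u v = -wedge v u := by
  ext x; simp [wedge_apply]

lemma adjoint_wedge (u v : W) : LinearMap.adjoint (wedge u v) = -(wedge u v) := by
  symm
  rw [LinearMap.eq_adjoint_iff]
  intro x y
  simp only [LinearMap.neg_apply, wedge_apply, inner_sub_left, inner_sub_right,
    real_inner_smul_left, real_inner_smul_right, inner_neg_left]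
  rw [real_inner_comm u x, real_inner_comm v x]
  ring

/-- The skew-adjoint endomorphisms, as a Lie subalgebra. -/
noncomputable def skewLie (W : Type*) [NormedAddCommGroup W] [InnerProductSpace ℝ W]
    [FiniteDimensional ℝ W] : LieSubalgebra ℝ (Module.End ℝ W) where
  carrier := {f | LinearMap.adjoint f = -f}
  add_mem' := by
    intro a b (ha : _ = _) (hb : _ = _)
    show LinearMap.adjoint (a + b) = _
    rw [map_add, ha, hb]; abel
  zero_mem' := by
    show LinearMap.adjoint (0 : Module.End ℝ W) = _
    simp
  smul_mem' := by
    intro c a (ha : _ = _)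
    show LinearMap.adjoint (c • a) = _
    rw [map_smul, ha]
    simp
  lie_mem' := by
    intro a b (ha : _ = _) (hb : _ = _)
    show LinearMap.adjoint ⁅a, b⁆ = _
    rw [Ring.lie_def, map_sub, Module.End.mul_eq_comp, Module.End.mul_eq_comp,
      LinearMap.adjoint_comp, LinearMap.adjoint_comp, ha, hb]
    simp only [Ring.lie_def, Module.End.mul_eq_comp, LinearMap.comp_neg, LinearMap.neg_comp,
      neg_neg, neg_sub]

lemma mem_skewLie {f : Module.End ℝ W} : f ∈ skewLie W ↔ LinearMap.adjoint f = -f :=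
  Iff.rfl

/-- The key bracket identity: for `u, v ⊥ ξ` with `‖ξ‖ = 1`,
`⁅ξ ∧ u, ξ ∧ v⁆ = u ∧ v`. -/
lemma lie_wedge_wedge (ξ u v : W) (hξ : ⟪ξ, ξ⟫ = 1) (hu : ⟪ξ, u⟫ = 0) (hv : ⟪ξ, v⟫ = 0) :
    ⁅wedge ξ u, wedge ξ v⁆ = wedge u v := by
  ext x
  have hu' : ⟪u, ξ⟫ = 0 := by rw [real_inner_comm]; exact hu
  have hv' : ⟪v, ξ⟫ = 0 := by rw [real_inner_comm]; exact hv
  simp only [Ring.lie_def, LinearMap.sub_apply, Module.End.mul_apply, wedge_apply,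
    inner_sub_right, real_inner_smul_right, hu, hv, hu', hv', hξ, smul_sub, smul_smul,
    mul_zero, zero_smul, mul_one, zero_sub, sub_zero, zero_mul]
  rw [real_inner_comm v u]
  module

end Aux

/-- If `Z` is a cyclic vector for `T ∈ so(V)` (with `V = ξ^⊥`, `T ξ = 0`), then the Lie
subalgebra of `so(V̂)` generated by the `ξ ∧ T^k Z` is all of `so(V̂)`. -/
theorem lieSpan_wedge_eq_so
    {W : Type*} [NormedAddCommGroup W] [InnerProductSpace ℝ W] [FiniteDimensional ℝ W]
    (ξ : W) (hξ : ‖ξ‖ = 1)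
    (hdim : 1 ≤ Module.finrank ℝ ((ℝ ∙ ξ)ᗮ : Submodule ℝ W))
    (T : Module.End ℝ W) (hskew : ∀ x y : W, ⟪T x, y⟫ = -⟪x, T y⟫)
    (hTξ : T ξ = 0)
    (Z : W) (hZmem : Z ∈ (ℝ ∙ ξ)ᗮ)
    (hcyc : Submodule.span ℝ (Set.range fun k : ℕ => (T ^ k) Z) = (ℝ ∙ ξ)ᗮ) :
    ∀ f : Module.End ℝ W,
      f ∈ LieSubalgebra.lieSpan ℝ (Module.End ℝ W)
          (Set.range fun k : ℕ => wedge ξ ((T ^ k) Z)) ↔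
        LinearMap.adjoint f = -f := by
  set L := LieSubalgebra.lieSpan ℝ (Module.End ℝ W)
      (Set.range fun k : ℕ => wedge ξ ((T ^ k) Z)) with hL
  have hξξ : ⟪ξ, ξ⟫ = 1 := by
    rw [real_inner_self_eq_norm_sq, hξ]; norm_num
  -- Step A: `ξ ∧ w ∈ L` for every `w`.
  have hA : ∀ w : W, wedge ξ w ∈ L := by
    have hsub : (ℝ ∙ ξ)ᗮ ≤ Submodule.comap (wedgeL ξ) (L : Submodule ℝ (Module.End ℝ W)) := by
      rw [← hcyc]
      rw [Submodule.span_le]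
      rintro _ ⟨k, rfl⟩
      simp only [Submodule.mem_comap]
      show wedge ξ ((T ^ k) Z) ∈ L
      exact LieSubalgebra.subset_lieSpan ⟨k, rfl⟩
    intro w
    have hmem : w - ⟪ξ, w⟫ • ξ ∈ (ℝ ∙ ξ)ᗮ := by
      rw [Submodule.mem_orthogonal_singleton_iff_inner_right]
      rw [inner_sub_right, real_inner_smul_right, hξξ]
      ring
    have h1 : wedge ξ (w - ⟪ξ, w⟫ • ξ) ∈ L := hsub hmem
    have h2 : wedge ξ (w - ⟪ξ, w⟫ • ξ) = wedge ξ w := by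
      have := (wedgeL ξ).map_sub w (⟪ξ, w⟫ • ξ)
      have h3 := (wedgeL ξ).map_smul (⟪ξ, w⟫) ξ
      show wedgeL ξ (w - ⟪ξ, w⟫ • ξ) = wedgeL ξ w
      rw [this, h3]
      show _ - ⟪ξ, w⟫ • wedge ξ ξ = _
      rw [wedge_self]
      simp
    rwa [h2] at h1
  -- Step B: all wedges are in `L`.
  have hB : ∀ u v : W, wedge u v ∈ L := by
    have hperp : ∀ u v : W, ⟪ξ, u⟫ = 0 → ⟪ξ, v⟫ = 0 → wedge u v ∈ L := by
      intro u v hu hv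
      rw [← lie_wedge_wedge ξ u v hξξ hu hv]
      exact L.lie_mem (hA u) (hA v)
    intro u v
    set u' := u - ⟪ξ, u⟫ • ξ with hu'def
    set v' := v - ⟪ξ, v⟫ • ξ with hv'def
    have hu' : ⟪ξ, u'⟫ = 0 := by
      rw [hu'def, inner_sub_right, real_inner_smul_right, hξξ]; ring
    have hv' : ⟪ξ, v'⟫ = 0 := by
      rw [hv'def, inner_sub_right, real_inner_smul_right, hξξ]; ring
    have hdecomp : wedge u v =
        wedge u' v' + ⟪ξ, u⟫ • wedge ξ v' + ⟪ξ, v⟫ • (-wedge ξ u')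
          + (⟪ξ, u⟫ * ⟪ξ, v⟫) • wedge ξ ξ := by
      ext x
      simp only [hu'def, hv'def, wedge_apply, LinearMap.add_apply, LinearMap.smul_apply,
        LinearMap.neg_apply, inner_sub_left, inner_sub_right, real_inner_smul_left,
        real_inner_smul_right, hξξ, smul_sub, sub_smul, smul_smul, smul_neg, neg_sub,
        smul_add, add_smul, mul_one]
      rw [real_inner_comm x ξ]
      module
    rw [hdecomp, wedge_self]
    refine L.add_mem (L.add_mem (L.add_mem (hperp u' v' hu' hv')
      (L.smul_mem _ (hA v'))) (L.smul_mem _ (L.neg_mem (hA u')))) ?_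
    simpa using L.zero_mem
  intro f
  constructor
  · intro hf
    have : L ≤ skewLie W := by
      rw [hL, LieSubalgebra.lieSpan_le]
      rintro _ ⟨k, rfl⟩
      exact adjoint_wedge ξ ((T ^ k) Z)
    exact this hf
  · -- every skew map is a combination of wedges
    intro hf
    have hinner : ∀ x y : W, ⟪f x, y⟫ = -⟪x, f y⟫ := by
      intro x y
      rw [← LinearMap.adjoint_inner_right f x y, hf]
      simp
    obtain b := stdOrthonormalBasis ℝ W
    have key : f = (2⁻¹ : ℝ) • ∑ i, wedge (b i) (f (b i)) := by
      ext x
      have h1 : ∑ i, ⟪b i, x⟫ • f (b i) = f x := by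
        have hs := b.sum_repr x
        simp only [b.repr_apply_apply] at hs
        simp_rw [← map_smul]
        rw [← map_sum, hs]
      have h2 : ∑ i, ⟪f (b i), x⟫ • b i = -f x := by
        have : ∀ i, ⟪f (b i), x⟫ • b i = -(⟪b i, f x⟫ • b i) := by
          intro i
          rw [hinner]
          simp
        rw [Finset.sum_congr rfl fun i _ => this i, Finset.sum_neg_distrib]
        have := b.sum_repr (f x)
        simp only [b.repr_apply_apply] at this
        rw [this]
      simp only [LinearMap.smul_apply, LinearMap.sum_apply, wedge_apply, Finset.sum_sub_distrib,
        h1, h2, sub_neg_eq_add]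
      rw [smul_add]
      module
    rw [key]
    exact L.smul_mem _ (L.toSubmodule.sum_mem fun i _ => hB (b i) (f (b i)))
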